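/- arXiv:1507.03713 — 6 statements merged into one kernel-verified Lean document; each statement's English description precedes it below -/
import Mathlib

section
/- Let f : ℝ^n → ℝ be convex differentiable with L-Lipschitz gradient (restricted to direction t), let Ψ be convex, F = f + Ψ, ℓ(t) = f(x) + ⟨∇f(x), t⟩ + Ψ(x+t), θ ∈ (0,1), λ ≤ L with λ > 0. Suppose ℓ(0) - ℓ(t) > (λ/2)‖t‖². Then for every α with 0 < α ≤ (1-θ)λ/L, the sufficient decrease condition F(x) - F(x + αt) ≥ θ(ℓ(0) - ℓ(αt)) holds. -/
open scoped RealInnerProductSpace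

set_option maxHeartbeats 1000000 in
/-- Line search acceptance: if `ℓ(0) - ℓ(t) > (λ/2)‖t‖²`, then every step size
`0 < α ≤ (1-θ)λ/L` satisfies the sufficient decrease condition
`F(x) - F(x + αt) ≥ θ(ℓ(0) - ℓ(αt))`. -/
theorem stmt_6 {n : ℕ} (f Ψ F : EuclideanSpace ℝ (Fin n) → ℝ)
    (hf : Differentiable ℝ f) (hfconv : ConvexOn ℝ Set.univ f)
    (hΨ : ConvexOn ℝ Set.univ Ψ)
    (hF : ∀ y, F y = f y + Ψ y)
    (x t : EuclideanSpace ℝ (Fin n)) (L lam θ : ℝ)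
    (hθ : θ ∈ Set.Ioo (0 : ℝ) 1) (hlam : 0 < lam) (hlamL : lam ≤ L)
    (hLip : ∀ s ∈ Set.Icc (0 : ℝ) 1,
      ‖gradient f (x + s • t) - gradient f x‖ ≤ L * s * ‖t‖)
    (ℓ : EuclideanSpace ℝ (Fin n) → ℝ)
    (hℓ : ∀ u, ℓ u = f x + ⟪gradient f x, u⟫ + Ψ (x + u))
    (hdec : ℓ 0 - ℓ t > lam / 2 * ‖t‖ ^ 2) :
    ∀ α : ℝ, 0 < α → α ≤ (1 - θ) * lam / L →
      F x - F (x + α • t) ≥ θ * (ℓ 0 - ℓ (α • t)) := by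
  intro α hα hαle
  obtain ⟨hθ0, hθ1⟩ := hθ
  have hL : 0 < L := lt_of_lt_of_le hlam hlamL
  have hαL : α * L ≤ (1 - θ) * lam := by
    have := (le_div_iff₀ hL).mp hαle
    linarith
  have hα1 : α ≤ 1 := by nlinarith
  set g := gradient f x with hg
  -- descent lemma
  have descent : f (x + α • t) ≤ f x + α * ⟪g, t⟫ + L / 2 * α ^ 2 * ‖t‖ ^ 2 := by
    set φ : ℝ → ℝ := fun s => f (x + s • t) - s * ⟪g, t⟫ - L / 2 * s ^ 2 * ‖t‖ ^ 2 with hφ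
    have hderiv : ∀ s : ℝ, HasDerivAt φ
        (⟪gradient f (x + s • t), t⟫ - ⟪g, t⟫ - L * s * ‖t‖ ^ 2) s := by
      intro s
      have hline : HasDerivAt (fun s : ℝ => x + s • t) t s := by
        simpa using ((hasDerivAt_id s).smul_const t).const_add x
      have h1 : HasDerivAt (fun s : ℝ => f (x + s • t)) (⟪gradient f (x + s • t), t⟫) s := by
        have := ((hf (x + s • t)).hasGradientAt.hasFDerivAt).comp_hasDerivAt s hline
        exact this.congr_deriv (by simp)
      have h2 : HasDerivAt (fun s : ℝ => s * ⟪g, t⟫) (⟪g, t⟫) s := by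
        simpa using (hasDerivAt_id s).mul_const (⟪g, t⟫ : ℝ)
      have h3 : HasDerivAt (fun s : ℝ => L / 2 * s ^ 2 * ‖t‖ ^ 2) (L * s * ‖t‖ ^ 2) s := by
        have h := ((hasDerivAt_pow 2 s).const_mul (L / 2)).mul_const (‖t‖ ^ 2)
        refine h.congr_deriv ?_
        push_cast
        ring
      exact (h1.sub h2).sub h3
    have hanti : AntitoneOn φ (Set.Icc 0 1) := by
      apply antitoneOn_of_deriv_nonpos (convex_Icc 0 1)
      · exact (Continuous.continuousOn (by
          exact continuous_iff_continuousAt.mpr fun s => (hderiv s).continuousAt))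
      · intro s _
        exact (hderiv s).differentiableAt.differentiableWithinAt
      · intro s hs
        rw [interior_Icc] at hs
        rw [(hderiv s).deriv]
        have hs' : s ∈ Set.Icc (0:ℝ) 1 := ⟨hs.1.le, hs.2.le⟩
        have hlip := hLip s hs'
        have hCS : ⟪gradient f (x + s • t) - g, t⟫ ≤ ‖gradient f (x + s • t) - g‖ * ‖t‖ :=
          real_inner_le_norm _ _
        rw [inner_sub_left] at hCS
        nlinarith [norm_nonneg t, norm_nonneg (gradient f (x + s • t) - g)]
    have hmem0 : (0:ℝ) ∈ Set.Icc (0:ℝ) 1 := ⟨le_refl 0, zero_le_one⟩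
    have hmemα : α ∈ Set.Icc (0:ℝ) 1 := ⟨hα.le, hα1⟩
    have := hanti hmem0 hmemα hα.le
    simp only [hφ, zero_smul, add_zero, zero_mul, pow_two, mul_zero, zero_pow] at this
    nlinarith [this]
  -- convexity of Ψ
  have hconv : Ψ (x + α • t) ≤ (1 - α) * Ψ x + α * Ψ (x + t) := by
    have h := hΨ.2 (Set.mem_univ x) (Set.mem_univ (x + t))
      (show (0:ℝ) ≤ 1 - α by linarith) hα.le (by ring)
    have heq : (1 - α) • x + α • (x + t) = x + α • t := by
      rw [smul_add]
      rw [sub_smul, one_smul]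
      abel
    rw [heq] at h
    simpa using h
  have hℓ0 : ℓ 0 = f x + Ψ x := by
    rw [hℓ 0]
    simp
  have hℓt : ℓ t = f x + ⟪g, t⟫ + Ψ (x + t) := hℓ t
  have hℓαt : ℓ (α • t) = f x + α * ⟪g, t⟫ + Ψ (x + α • t) := by
    rw [hℓ (α • t), real_inner_smul_right]
  rw [hF x, hF (x + α • t), hℓ0, hℓαt]
  rw [hℓ0, hℓt] at hdec
  have key : f x + Ψ x - (f x + α * ⟪g, t⟫ + Ψ (x + α • t)) ≥ α * (lam / 2 * ‖t‖ ^ 2) := by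
    nlinarith [mul_le_mul_of_nonneg_left hdec.le hα.le]
  have h2 : (1 - θ) * (f x + Ψ x - (f x + α * ⟪g, t⟫ + Ψ (x + α • t)))
      ≥ (1 - θ) * (α * (lam / 2 * ‖t‖ ^ 2)) :=
    mul_le_mul_of_nonneg_left key (by linarith)
  have h3 : (1 - θ) * (α * (lam / 2 * ‖t‖ ^ 2)) ≥ α * L * (α * ‖t‖ ^ 2 / 2) := by
    nlinarith [mul_le_mul_of_nonneg_right hαL (show (0:ℝ) ≤ α * ‖t‖ ^ 2 / 2 by positivity)]
  nlinarith [h2, h3, descent]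
end

section
/- Under the same hypotheses, if additionally α ≥ α_* := (1-θ)λ/(2L) and the line search condition F(x) - F(x+αt) ≥ θ(ℓ(0) - ℓ(αt)) holds, then F(x) - F(x + αt) > θ(1-θ)·(λ²/(4L))·‖t‖². -/
open scoped RealInnerProductSpace

/-- Under the line search hypotheses, if additionally `α ≥ (1-θ)λ/(2L)` and the line
search condition `F(x) - F(x+αt) ≥ θ(ℓ(0) - ℓ(αt))` holds, then
`F(x) - F(x+αt) > θ(1-θ)(λ²/(4L))‖t‖²`. -/
theorem stmt_7 {n : ℕ} (f Ψ F : EuclideanSpace ℝ (Fin n) → ℝ)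
    (hf : Differentiable ℝ f) (hfconv : ConvexOn ℝ Set.univ f)
    (hΨ : ConvexOn ℝ Set.univ Ψ)
    (hF : ∀ y, F y = f y + Ψ y)
    (x t : EuclideanSpace ℝ (Fin n)) (L lam θ : ℝ)
    (hθ : θ ∈ Set.Ioo (0 : ℝ) 1) (hlam : 0 < lam) (hlamL : lam ≤ L)
    (hLip : ∀ s ∈ Set.Icc (0 : ℝ) 1,
      ‖gradient f (x + s • t) - gradient f x‖ ≤ L * s * ‖t‖)
    (ℓ : EuclideanSpace ℝ (Fin n) → ℝ)
    (hℓ : ∀ u, ℓ u = f x + ⟪gradient f x, u⟫ + Ψ (x + u))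
    (hdec : ℓ 0 - ℓ t > lam / 2 * ‖t‖ ^ 2)
    (α : ℝ) (hα0 : 0 < α) (hα1 : α ≤ 1)
    (hαlb : α ≥ (1 - θ) * lam / (2 * L))
    (hls : F x - F (x + α • t) ≥ θ * (ℓ 0 - ℓ (α • t))) :
    F x - F (x + α • t) > θ * (1 - θ) * (lam ^ 2 / (4 * L)) * ‖t‖ ^ 2 := by
  obtain ⟨hθ0, hθ1⟩ := hθ
  have hL : (0 : ℝ) < L := lt_of_lt_of_le hlam hlamL
  -- t ≠ 0
  have ht : t ≠ 0 := by
    intro h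
    rw [h] at hdec
    simp at hdec
  have htpos : 0 < ‖t‖ ^ 2 := by
    have : 0 < ‖t‖ := norm_pos_iff.mpr ht
    positivity
  -- convexity of Ψ along the segment
  have hΨconv : Ψ (x + α • t) ≤ (1 - α) * Ψ x + α * Ψ (x + t) := by
    have := hΨ.2 (Set.mem_univ x) (Set.mem_univ (x + t))
      (by linarith : (0:ℝ) ≤ 1 - α) hα0.le (by ring)
    have hpt : (1 - α) • x + α • (x + t) = x + α • t := by
      module
    rwa [hpt] at this
  -- key inequality: ℓ 0 - ℓ (α • t) ≥ α * (ℓ 0 - ℓ t)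
  have hkey : ℓ 0 - ℓ (α • t) ≥ α * (ℓ 0 - ℓ t) := by
    rw [hℓ, hℓ, hℓ]
    simp only [inner_zero_right, inner_smul_right, add_zero]
    nlinarith [hΨconv]
  have h1 : F x - F (x + α • t) ≥ θ * (α * (ℓ 0 - ℓ t)) := by
    calc F x - F (x + α • t) ≥ θ * (ℓ 0 - ℓ (α • t)) := hls
      _ ≥ θ * (α * (ℓ 0 - ℓ t)) := by nlinarith
  have h2 : α * (ℓ 0 - ℓ t) > α * (lam / 2 * ‖t‖ ^ 2) := by
    exact mul_lt_mul_of_pos_left hdec hα0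
  have h3 : α * (lam / 2 * ‖t‖ ^ 2) ≥ ((1 - θ) * lam / (2 * L)) * (lam / 2 * ‖t‖ ^ 2) := by
    apply mul_le_mul_of_nonneg_right hαlb
    positivity
  have h4 : ((1 - θ) * lam / (2 * L)) * (lam / 2 * ‖t‖ ^ 2)
      = (1 - θ) * (lam ^ 2 / (4 * L)) * ‖t‖ ^ 2 := by
    field_simp
    ring
  nlinarith [h1, h2, h3, mul_lt_mul_of_pos_left (lt_of_lt_of_le h2 (le_of_eq rfl)) hθ0]
end

section
/- Let prox_{Ψ*} : ℝ^n → ℝ^n be 1-Lipschitz (nonexpansive), let H be a symmetric matrix with ‖H‖ ≤ Λ, let g(t) = ∇f(x) + Ht + prox_{Ψ*}(x + t - ∇f(x) - Ht). If ‖g(t)‖ ≤ η‖g(0)‖ for some η ∈ [0,1), then ‖t‖ ≥ ((1-η)/(1 + 2Λ))·‖g(0)‖. -/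
open scoped RealInnerProductSpace

/-- Inexactness lower bound on the step: if `p = prox_{Ψ*}` is nonexpansive,
`‖H‖ ≤ Λ`, `g(t) = ∇f(x) + Ht + p(x + t - ∇f(x) - Ht)` and `‖g(t)‖ ≤ η‖g(0)‖`
with `η ∈ [0,1)`, then `‖t‖ ≥ ((1-η)/(1+2Λ))‖g(0)‖`. -/
theorem stmt_8 {n : ℕ} (p : EuclideanSpace ℝ (Fin n) → EuclideanSpace ℝ (Fin n))
    (hp : LipschitzWith 1 p)
    (H : EuclideanSpace ℝ (Fin n) →ₗ[ℝ] EuclideanSpace ℝ (Fin n))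
    (hsymm : ∀ u v, ⟪H u, v⟫ = ⟪u, H v⟫)
    (Λ : ℝ) (hΛ : 0 ≤ Λ) (hHnorm : ∀ v, ‖H v‖ ≤ Λ * ‖v‖)
    (x gf t : EuclideanSpace ℝ (Fin n))
    (g : EuclideanSpace ℝ (Fin n) → EuclideanSpace ℝ (Fin n))
    (hg : ∀ u, g u = gf + H u + p (x + u - gf - H u))
    (η : ℝ) (hη : η ∈ Set.Ico (0 : ℝ) 1)
    (hstop : ‖g t‖ ≤ η * ‖g 0‖) :
    ‖t‖ ≥ (1 - η) / (1 + 2 * Λ) * ‖g 0‖ := by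
  obtain ⟨hη0, hη1⟩ := hη
  have hdenom : (0:ℝ) < 1 + 2 * Λ := by linarith
  have key : ‖g t - g 0‖ ≤ (1 + 2 * Λ) * ‖t‖ := by
    rw [hg t, hg 0]
    have h1 : gf + H t + p (x + t - gf - H t) - (gf + H 0 + p (x + 0 - gf - H 0))
        = H t + (p (x + t - gf - H t) - p (x - gf)) := by
      simp [map_zero]
      abel
    rw [h1]
    have h2 : ‖p (x + t - gf - H t) - p (x - gf)‖ ≤ ‖t - H t‖ := by
      have := hp.dist_le_mul (x + t - gf - H t) (x - gf)
      simp only [NNReal.coe_one, one_mul, dist_eq_norm] at this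
      calc ‖p (x + t - gf - H t) - p (x - gf)‖ ≤ ‖x + t - gf - H t - (x - gf)‖ := this
        _ = ‖t - H t‖ := by congr 1; abel
    calc ‖H t + (p (x + t - gf - H t) - p (x - gf))‖
        ≤ ‖H t‖ + ‖p (x + t - gf - H t) - p (x - gf)‖ := norm_add_le _ _
      _ ≤ Λ * ‖t‖ + ‖t - H t‖ := add_le_add (hHnorm t) h2
      _ ≤ Λ * ‖t‖ + (‖t‖ + ‖H t‖) := by
          have := norm_sub_le t (H t); linarith
      _ ≤ Λ * ‖t‖ + (‖t‖ + Λ * ‖t‖) := by have := hHnorm t; linarith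
      _ = (1 + 2 * Λ) * ‖t‖ := by ring
  have h3 : ‖g 0‖ - ‖g t‖ ≤ ‖g t - g 0‖ := by
    have := norm_sub_norm_le (g 0) (g t)
    rw [norm_sub_rev] at this; linarith
  have h4 : (1 - η) * ‖g 0‖ ≤ (1 + 2 * Λ) * ‖t‖ := by nlinarith
  rw [ge_iff_le, div_mul_eq_mul_div, div_le_iff₀ hdenom]
  linarith
end

section
/- Let f : ℝ^n → ℝ have L-Lipschitz gradient in direction t, let H be symmetric with eigenvalues in [λ, Λ], 0 < λ ≤ L, and let t satisfy ⟨Ht, t⟩ = -⟨∇f(x), t⟩. Then for α* = λ/L, f(x + α* t) ≤ f(x) - (λ/(2L))·⟨Ht, t⟩. -/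
open scoped RealInnerProductSpace

/-- Smooth decrease with exact step `α* = λ/L`: if `f` has `L`-Lipschitz gradient in
direction `t`, `H` is symmetric with eigenvalues in `[λ, Λ]`, `0 < λ ≤ L`, and
`⟨Ht, t⟩ = -⟨∇f(x), t⟩`, then `f(x + (λ/L)t) ≤ f(x) - (λ/(2L))⟨Ht, t⟩`. -/
theorem stmt_12 {n : ℕ} (f : EuclideanSpace ℝ (Fin n) → ℝ)
    (hf : Differentiable ℝ f)
    (x t : EuclideanSpace ℝ (Fin n)) (L lam Λ : ℝ)
    (hlam : 0 < lam) (hlamL : lam ≤ L) (hlamΛ : lam ≤ Λ)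
    (hLip : ∀ s ∈ Set.Icc (0 : ℝ) 1,
      ‖gradient f (x + s • t) - gradient f x‖ ≤ L * s * ‖t‖)
    (H : EuclideanSpace ℝ (Fin n) →ₗ[ℝ] EuclideanSpace ℝ (Fin n))
    (hsymm : ∀ u v, ⟪H u, v⟫ = ⟪u, H v⟫)
    (hlb : ∀ v, lam * ‖v‖ ^ 2 ≤ ⟪H v, v⟫)
    (hub : ∀ v, ‖H v‖ ≤ Λ * ‖v‖)
    (hCG : ⟪H t, t⟫ = -⟪gradient f x, t⟫) :
    f (x + (lam / L) • t) ≤ f x - lam / (2 * L) * ⟪H t, t⟫ := by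
  have hL : 0 < L := lt_of_lt_of_le hlam hlamL
  set α : ℝ := lam / L with hα
  have hα0 : 0 < α := div_pos hlam hL
  have hα1 : α ≤ 1 := (div_le_one hL).mpr hlamL
  -- derivative of s ↦ f (x + s • t)
  have hD : ∀ s : ℝ, HasDerivAt (fun s : ℝ => f (x + s • t))
      ⟪gradient f (x + s • t), t⟫ s := by
    intro s
    have hc : HasDerivAt (fun s : ℝ => x + s • t) t s := by
      simpa using ((hasDerivAt_id s).smul_const t).const_add x
    have hg := ((hf (x + s • t)).hasGradientAt.hasFDerivAt).comp_hasDerivAt s hc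
    refine hg.congr_deriv ?_
    simp [InnerProductSpace.toDual_apply_apply]
  set φ : ℝ → ℝ := fun s =>
    f (x + s • t) - s * ⟪gradient f x, t⟫ - L * s ^ 2 / 2 * ‖t‖ ^ 2 with hφ
  have hφD : ∀ s : ℝ, HasDerivAt φ
      (⟪gradient f (x + s • t), t⟫ - ⟪gradient f x, t⟫ - L * s * ‖t‖ ^ 2) s := by
    intro s
    have h1 : HasDerivAt (fun s : ℝ => s * ⟪gradient f x, t⟫) ⟪gradient f x, t⟫ s := by
      simpa using (hasDerivAt_id s).mul_const ⟪gradient f x, t⟫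
    have h2 : HasDerivAt (fun s : ℝ => L * s ^ 2 / 2 * ‖t‖ ^ 2) (L * s * ‖t‖ ^ 2) s := by
      have := (((hasDerivAt_pow 2 s).const_mul L).div_const 2).mul_const (‖t‖ ^ 2)
      refine this.congr_deriv ?_
      rw [show (2:ℕ) - 1 = 1 from rfl]; push_cast; ring
    exact ((hD s).sub h1).sub h2
  have hanti : AntitoneOn φ (Set.Icc 0 α) := by
    apply antitoneOn_of_deriv_nonpos (convex_Icc 0 α)
    · exact Continuous.continuousOn (by
        rw [hφ]; have := hf.continuous; fun_prop
        )
    · intro s hs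
      exact ((hφD s).differentiableAt).differentiableWithinAt
    · intro s hs
      rw [interior_Icc] at hs
      rw [(hφD s).deriv]
      have hs01 : s ∈ Set.Icc (0:ℝ) 1 := ⟨hs.1.le, hs.2.le.trans hα1⟩
      have hcs : ⟪gradient f (x + s • t) - gradient f x, t⟫ ≤ L * s * ‖t‖ ^ 2 := by
        calc ⟪gradient f (x + s • t) - gradient f x, t⟫
            ≤ ‖gradient f (x + s • t) - gradient f x‖ * ‖t‖ := real_inner_le_norm _ _
          _ ≤ (L * s * ‖t‖) * ‖t‖ := by
              exact mul_le_mul_of_nonneg_right (hLip s hs01) (norm_nonneg t)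
          _ = L * s * ‖t‖ ^ 2 := by ring
      have := inner_sub_left (𝕜 := ℝ) (gradient f (x + s • t)) (gradient f x) t
      linarith [hcs, this.symm ▸ hcs]
  have key : φ α ≤ φ 0 := hanti ⟨le_refl 0, hα0.le⟩ ⟨hα0.le, le_refl α⟩ hα0.le
  have hφ0 : φ 0 = f x := by simp [hφ]
  have expand : f (x + α • t) ≤ f x + α * ⟪gradient f x, t⟫ + L * α ^ 2 / 2 * ‖t‖ ^ 2 := by
    have := key
    rw [hφ0] at this
    simp only [hφ] at this
    linarith
  have hq : 0 ≤ ⟪H t, t⟫ :=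
    le_trans (by positivity) (hlb t)
  have hnt : ‖t‖ ^ 2 ≤ ⟪H t, t⟫ / lam := by
    rw [le_div_iff₀ hlam]; linarith [hlb t]
  have hgr : ⟪gradient f x, t⟫ = -⟪H t, t⟫ := by linarith [hCG]
  have : f (x + α • t) ≤ f x - α * ⟪H t, t⟫ + L * α ^ 2 / 2 * (⟪H t, t⟫ / lam) := by
    have h2 : L * α ^ 2 / 2 * ‖t‖ ^ 2 ≤ L * α ^ 2 / 2 * (⟪H t, t⟫ / lam) := by
      apply mul_le_mul_of_nonneg_left hnt (by positivity)
    rw [hgr] at expand; linarith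
  have heq : f x - α * ⟪H t, t⟫ + L * α ^ 2 / 2 * (⟪H t, t⟫ / lam)
      = f x - lam / (2 * L) * ⟪H t, t⟫ := by
    rw [hα]; field_simp; ring
  linarith [heq ▸ this]
end

section
/- Let {ξ_k}_{k≥0} be a nonnegative nonincreasing sequence of random variables with ξ_{k+1} depending only on ξ_k, satisfying E[ξ_{k+1} | ξ_k] ≤ (1 - 1/c)·ξ_k whenever ξ_k ≥ ε, where c > 1 and 0 < ε < ξ_0 (ξ_0 deterministic). Then for any ρ ∈ (0,1) and any K ≥ c·ln(ξ_0/(ε ρ)), it holds that P(ξ_K ≤ ε) ≥ 1 - ρ. -/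
open MeasureTheory

/-- Linear-rate high-probability lemma: a nonnegative nonincreasing sequence of random
variables with conditional linear decrease by factor `(1 - 1/c)` on `{ξ_k ≥ ε}` satisfies
`P(ξ_K ≤ ε) ≥ 1 - ρ` for `K ≥ c ln(ξ₀/(ερ))`. -/
theorem stmt_14 {Ω : Type*} [MeasurableSpace Ω] (μ : Measure Ω) [IsProbabilityMeasure μ]
    (ξ : ℕ → Ω → ℝ) (hmeas : ∀ k, Measurable (ξ k))
    (ξ0 c ε ρ : ℝ)
    (hdet : ∀ ω, ξ 0 ω = ξ0)
    (hnonneg : ∀ k ω, 0 ≤ ξ k ω)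
    (hmono : ∀ k ω, ξ (k + 1) ω ≤ ξ k ω)
    (hc : 1 < c) (hε : 0 < ε) (hεξ0 : ε < ξ0)
    (hcond : ∀ k, ∀ᵐ ω ∂μ, ε ≤ ξ k ω →
      (μ[ξ (k + 1) | MeasurableSpace.comap (ξ k) Real.measurableSpace]) ω
        ≤ (1 - 1 / c) * ξ k ω)
    (hρ : ρ ∈ Set.Ioo (0 : ℝ) 1)
    (K : ℕ) (hK : (K : ℝ) ≥ c * Real.log (ξ0 / (ε * ρ))) :
    1 - ρ ≤ (μ {ω | ξ K ω ≤ ε}).toReal := by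
  have hc0 : (0:ℝ) < c := lt_trans one_pos hc
  have hq0 : (0:ℝ) ≤ 1 - 1/c := by
    have : 1/c < 1 := by rw [div_lt_one hc0]; exact hc
    linarith
  have hbound : ∀ k ω, ξ k ω ≤ ξ0 := by
    intro k ω
    induction k with
    | zero => exact (hdet ω).le
    | succ n ih => exact (hmono n ω).trans ih
  have hint : ∀ k, Integrable (ξ k) μ := by
    intro k
    refine (integrable_const ξ0).mono' (hmeas k).aestronglyMeasurable ?_
    filter_upwards with ω
    rw [Real.norm_eq_abs, abs_of_nonneg (hnonneg k ω)]
    exact hbound k ω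
  set A : ℕ → Set Ω := fun k => {ω | ε ≤ ξ k ω} with hA
  have hAmeas : ∀ k, MeasurableSet (A k) :=
    fun k => measurableSet_le measurable_const (hmeas k)
  have hAm : ∀ k, MeasurableSet[MeasurableSpace.comap (ξ k) Real.measurableSpace] (A k) :=
    fun k => ⟨Set.Ici ε, measurableSet_Ici, rfl⟩
  have hm : ∀ k, MeasurableSpace.comap (ξ k) Real.measurableSpace ≤ ‹MeasurableSpace Ω› :=
    fun k => (hmeas k).comap_le
  have key : ∀ k, ∫ ω in A k, ξ k ω ∂μ ≤ (1 - 1/c)^k * ξ0 := by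
    intro k
    induction k with
    | zero =>
      simp only [pow_zero, one_mul]
      calc ∫ ω in A 0, ξ 0 ω ∂μ ≤ ∫ ω, ξ 0 ω ∂μ :=
            setIntegral_le_integral (hint 0) (ae_of_all _ (hnonneg 0))
        _ = ξ0 := by
            rw [show ξ 0 = fun _ => ξ0 from funext hdet]
            simp
    | succ n ih =>
      have hsub : A (n+1) ⊆ A n := fun ω hω => le_trans hω (hmono n ω)
      have h1 : ∫ ω in A (n+1), ξ (n+1) ω ∂μ ≤ ∫ ω in A n, ξ (n+1) ω ∂μ :=
        setIntegral_mono_set (hint (n+1)).integrableOn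
          (ae_of_all _ (hnonneg (n+1))) (HasSubset.Subset.eventuallyLE hsub)
      have h2 : ∫ ω in A n, ξ (n+1) ω ∂μ
          = ∫ ω in A n, (μ[ξ (n+1) | MeasurableSpace.comap (ξ n) Real.measurableSpace]) ω ∂μ :=
        (setIntegral_condExp (hm n) (hint (n+1)) (hAm n)).symm
      have h3 : ∫ ω in A n, (μ[ξ (n+1) | MeasurableSpace.comap (ξ n) Real.measurableSpace]) ω ∂μ
          ≤ ∫ ω in A n, (1 - 1/c) * ξ n ω ∂μ := by
        refine setIntegral_mono_ae_restrict integrable_condExp.integrableOn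
          (((hint n).const_mul _).integrableOn) ?_
        rw [Filter.EventuallyLE, ae_restrict_iff' (hAmeas n)]
        filter_upwards [hcond n] with ω h hω using h hω
      have h4 : ∫ ω in A n, (1 - 1/c) * ξ n ω ∂μ = (1 - 1/c) * ∫ ω in A n, ξ n ω ∂μ :=
        integral_const_mul _ _
      calc ∫ ω in A (n+1), ξ (n+1) ω ∂μ
          ≤ (1 - 1/c) * ∫ ω in A n, ξ n ω ∂μ := by rw [← h4]; exact h1.trans (h2.le.trans h3)
        _ ≤ (1 - 1/c) * ((1 - 1/c)^n * ξ0) := mul_le_mul_of_nonneg_left ih hq0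
        _ = (1 - 1/c)^(n+1) * ξ0 := by ring
  -- Markov
  have hmark : ε * (μ (A K)).toReal ≤ ∫ ω in A K, ξ K ω ∂μ := by
    have := setIntegral_mono_on (integrable_const ε).integrableOn (hint K).integrableOn
      (hAmeas K) (fun ω hω => hω)
    simpa [setIntegral_const, mul_comm, Measure.real] using this
  -- Analytic bound
  have hρ0 := hρ.1
  have hρ1 := hρ.2
  have hερ : (0:ℝ) < ε * ρ := mul_pos hε hρ0
  have hξ0 : (0:ℝ) < ξ0 := lt_trans hε hεξ0
  have hexp : (1 - 1/c)^K * ξ0 ≤ ε * ρ := by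
    have h1 : (1 - 1/c : ℝ) ≤ Real.exp (-(1/c)) := by
      have := Real.add_one_le_exp (-(1/c))
      linarith
    have h2 : (1 - 1/c)^K ≤ Real.exp (-(1/c)) ^ K :=
      pow_le_pow_left₀ hq0 h1 K
    have h3 : Real.exp (-(1/c)) ^ K = Real.exp ((K:ℝ) * (-(1/c))) := by
      rw [← Real.exp_nat_mul]
    have h4 : (K:ℝ) * (-(1/c)) ≤ Real.log (ε * ρ / ξ0) := by
      have hlog : Real.log (ε * ρ / ξ0) = - Real.log (ξ0 / (ε * ρ)) := by
        rw [← Real.log_inv]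
        congr 1
        field_simp
      rw [hlog]
      have hKc : Real.log (ξ0 / (ε * ρ)) ≤ (K:ℝ) / c := by
        rw [le_div_iff₀ hc0]
        calc Real.log (ξ0 / (ε * ρ)) * c = c * Real.log (ξ0 / (ε * ρ)) := mul_comm _ _
          _ ≤ K := hK
      have : -((K:ℝ)/c) ≤ - Real.log (ξ0 / (ε * ρ)) := neg_le_neg hKc
      calc (K:ℝ) * (-(1/c)) = -((K:ℝ)/c) := by ring
        _ ≤ _ := this
    have h5 : Real.exp ((K:ℝ) * (-(1/c))) ≤ ε * ρ / ξ0 := by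
      calc Real.exp ((K:ℝ) * (-(1/c))) ≤ Real.exp (Real.log (ε * ρ / ξ0)) :=
            Real.exp_le_exp.mpr h4
        _ = ε * ρ / ξ0 := Real.exp_log (by positivity)
    calc (1 - 1/c)^K * ξ0 ≤ (ε * ρ / ξ0) * ξ0 := by
          apply mul_le_mul_of_nonneg_right _ hξ0.le
          exact h2.trans (h3.le.trans h5)
      _ = ε * ρ := by field_simp
  have hμA : (μ (A K)).toReal ≤ ρ := by
    have h := le_trans hmark ((key K).trans hexp)
    have := (mul_le_mul_iff_right₀ hε).mp h
    exact this
  -- conclude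
  have hcompl : (μ ((A K)ᶜ)).toReal = 1 - (μ (A K)).toReal := by
    rw [measure_compl (hAmeas K) (measure_ne_top _ _), measure_univ,
      ENNReal.toReal_sub_of_le prob_le_one (by simp)]
    simp
  have hsubc : (A K)ᶜ ⊆ {ω | ξ K ω ≤ ε} := by
    intro ω hω
    simp only [Set.mem_compl_iff, Set.mem_setOf_eq, hA] at hω
    exact (not_le.mp hω).le
  calc 1 - ρ ≤ 1 - (μ (A K)).toReal := by linarith
    _ = (μ ((A K)ᶜ)).toReal := hcompl.symm
    _ ≤ (μ {ω | ξ K ω ≤ ε}).toReal :=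
        ENNReal.toReal_mono (measure_ne_top _ _) (measure_mono hsubc)
end

section
/- Let {ξ_k}_{k≥0} be a nonnegative nonincreasing sequence of random variables with E[ξ_{k+1} | ξ_k] ≤ ξ_k - ξ_k²/c₁ for all k, where c₁ > 0 and ξ_0 is deterministic. Choose 0 < ε < min(ξ_0, c₁) and ρ ∈ (0,1). Then for any K ≥ (c₁/ε)(1 + ln(1/ρ)) + 2 - c₁/ξ_0, it holds that P(ξ_K ≤ ε) ≥ 1 - ρ. -/
open MeasureTheory

/-- Quadratic step bound: if `0 ≤ x` and `a * x ≤ c` then `x - x²/c ≤ c/(a+1)`. -/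
lemma quad_step_aux {c a x : ℝ} (hc : 0 < c) (ha : 0 < a) (hx : 0 ≤ x) (hax : a * x ≤ c) :
    x - x ^ 2 / c ≤ c / (a + 1) := by
  have h1 : x - x ^ 2 / c = (c * x - x ^ 2) / c := by field_simp
  rw [h1, div_le_div_iff₀ hc (by linarith)]
  nlinarith [sq_nonneg (c - a * x - x), mul_nonneg (mul_nonneg ha.le hx) (sub_nonneg.2 hax),
    mul_nonneg hx (sub_nonneg.2 hax)]

/-- Deterministic recursion analysis. -/
lemma rec_bound_aux (θ : ℕ → ℝ) (c ε ξ0 ρ : ℝ) (hc : 0 < c) (hε : 0 < ε) (hεξ0 : ε < ξ0)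
    (hεc : ε < c) (hρ : ρ ∈ Set.Ioo (0 : ℝ) 1) (h0 : θ 0 ≤ ξ0) (hnn : ∀ k, 0 ≤ θ k)
    (h1 : ∀ k, θ (k + 1) ≤ θ k - θ k ^ 2 / c) (h2 : ∀ k, θ (k + 1) ≤ (1 - ε / c) * θ k)
    (K : ℕ) (hK : (K : ℝ) ≥ c / ε * (1 + Real.log (1 / ρ)) + 2 - c / ξ0) :
    θ K ≤ ε * ρ := by
  have hξ0 : 0 < ξ0 := hε.trans hεξ0
  have phase1 : ∀ k : ℕ, θ k ≤ c / ((k : ℝ) + c / ξ0) := by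
    intro k
    induction k with
    | zero =>
      have e : c / ((0 : ℕ) + c / ξ0) = ξ0 := by
        rw [Nat.cast_zero, zero_add, div_div_eq_mul_div, mul_comm, mul_div_assoc,
          div_self hc.ne', mul_one]
      rw [e]; exact h0
    | succ k ih =>
      have ha : (0 : ℝ) < (k : ℝ) + c / ξ0 := by positivity
      have hax : ((k : ℝ) + c / ξ0) * θ k ≤ c := by
        have := (le_div_iff₀ ha).1 ih
        linarith
      have := quad_step_aux hc ha (hnn k) hax
      calc θ (k + 1) ≤ θ k - θ k ^ 2 / c := h1 k
        _ ≤ c / (((k : ℝ) + c / ξ0) + 1) := this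
        _ = c / (((k + 1 : ℕ) : ℝ) + c / ξ0) := by push_cast; ring_nf
  have hcεξ : c / ξ0 < c / ε := div_lt_div_of_pos_left hc hε hεξ0
  set k₁ : ℕ := ⌈c / ε - c / ξ0⌉₊ with hk₁def
  have hk₁ge : c / ε - c / ξ0 ≤ (k₁ : ℝ) := Nat.le_ceil _
  have hk₁lt : (k₁ : ℝ) < c / ε - c / ξ0 + 1 := Nat.ceil_lt_add_one (by linarith)
  have hL : 0 < Real.log (1 / ρ) := Real.log_pos (one_lt_one_div hρ.1 hρ.2)
  have hcε : 0 < c / ε := by positivity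
  have hθk₁ : θ k₁ ≤ ε := by
    have h1' : c / ((k₁ : ℝ) + c / ξ0) ≤ c / (c / ε) := by
      apply div_le_div_of_nonneg_left hc.le hcε
      linarith
    have e : c / (c / ε) = ε := by
      rw [div_div_eq_mul_div, mul_comm, mul_div_assoc, div_self hc.ne', mul_one]
    exact (phase1 k₁).trans (by rw [e] at h1'; exact h1')
  have hcL : 0 ≤ c / ε * Real.log (1 / ρ) := by positivity
  have hKk₁R : (k₁ : ℝ) + c / ε * Real.log (1 / ρ) + 1 ≤ (K : ℝ) := by
    have : c / ε * (1 + Real.log (1 / ρ)) = c / ε + c / ε * Real.log (1 / ρ) := by ring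
    rw [this] at hK
    linarith
  have hKk₁ : k₁ ≤ K := by
    have : (k₁ : ℝ) ≤ (K : ℝ) := by linarith
    exact_mod_cast this
  set n : ℕ := K - k₁ with hndef
  have hn : (n : ℝ) = (K : ℝ) - (k₁ : ℝ) := by
    rw [hndef]; push_cast [Nat.cast_sub hKk₁]; ring
  have hnL : c / ε * Real.log (1 / ρ) ≤ (n : ℝ) := by rw [hn]; linarith
  have hbase : 0 ≤ 1 - ε / c := by
    have : ε / c < 1 := (div_lt_one hc).2 hεc
    linarith
  have phase2 : ∀ m : ℕ, θ (k₁ + m) ≤ (1 - ε / c) ^ m * θ k₁ := by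
    intro m
    induction m with
    | zero => simp
    | succ m ih =>
      calc θ (k₁ + (m + 1)) = θ ((k₁ + m) + 1) := by ring_nf
        _ ≤ (1 - ε / c) * θ (k₁ + m) := h2 _
        _ ≤ (1 - ε / c) * ((1 - ε / c) ^ m * θ k₁) := by
            exact mul_le_mul_of_nonneg_left ih hbase
        _ = (1 - ε / c) ^ (m + 1) * θ k₁ := by ring
  have hKeq : k₁ + n = K := Nat.add_sub_cancel' hKk₁
  have hpow : (1 - ε / c) ^ n ≤ ρ := by
    have hb : 1 - ε / c ≤ Real.exp (-(ε / c)) := by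
      have := Real.add_one_le_exp (-(ε / c)); linarith
    have h3 : (1 - ε / c) ^ n ≤ Real.exp (-(ε / c)) ^ n := pow_le_pow_left₀ hbase hb n
    have h4 : Real.exp (-(ε / c)) ^ n = Real.exp ((n : ℝ) * -(ε / c)) := by
      rw [← Real.exp_nat_mul]
    have h5 : (n : ℝ) * -(ε / c) ≤ Real.log ρ := by
      have hlog : Real.log (1 / ρ) = -Real.log ρ := by rw [one_div, Real.log_inv]
      have h6 : Real.log (1 / ρ) ≤ (n : ℝ) * (ε / c) := by
        have := mul_le_mul_of_nonneg_right hnL (le_of_lt (by positivity : (0:ℝ) < ε / c))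
        calc Real.log (1 / ρ) = c / ε * Real.log (1 / ρ) * (ε / c) := by
              field_simp
          _ ≤ (n : ℝ) * (ε / c) := this
      rw [hlog] at h6; linarith
    calc (1 - ε / c) ^ n ≤ Real.exp ((n : ℝ) * -(ε / c)) := h4 ▸ h3
      _ ≤ Real.exp (Real.log ρ) := Real.exp_le_exp.2 h5
      _ = ρ := Real.exp_log hρ.1
  calc θ K = θ (k₁ + n) := by rw [hKeq]
    _ ≤ (1 - ε / c) ^ n * θ k₁ := phase2 n
    _ ≤ ρ * ε := mul_le_mul hpow hθk₁ (hnn k₁) hρ.1.le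
    _ = ε * ρ := mul_comm _ _

/-- Sublinear-rate high-probability lemma: a nonnegative nonincreasing sequence of random
variables with conditional decrease `E[ξ_{k+1}|ξ_k] ≤ ξ_k - ξ_k²/c₁` satisfies
`P(ξ_K ≤ ε) ≥ 1 - ρ` for `K ≥ (c₁/ε)(1 + ln(1/ρ)) + 2 - c₁/ξ₀`. -/
theorem stmt_15 {Ω : Type*} [MeasurableSpace Ω] (μ : Measure Ω) [IsProbabilityMeasure μ]
    (ξ : ℕ → Ω → ℝ) (hmeas : ∀ k, Measurable (ξ k))
    (ξ0 c₁ ε ρ : ℝ)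
    (hdet : ∀ ω, ξ 0 ω = ξ0)
    (hnonneg : ∀ k ω, 0 ≤ ξ k ω)
    (hmono : ∀ k ω, ξ (k + 1) ω ≤ ξ k ω)
    (hc₁ : 0 < c₁) (hε : 0 < ε) (hεξ0 : ε < ξ0) (hεc₁ : ε < c₁)
    (hcond : ∀ k, ∀ᵐ ω ∂μ,
      (μ[ξ (k + 1) | MeasurableSpace.comap (ξ k) Real.measurableSpace]) ω
        ≤ ξ k ω - (ξ k ω) ^ 2 / c₁)
    (hρ : ρ ∈ Set.Ioo (0 : ℝ) 1)
    (K : ℕ) (hK : (K : ℝ) ≥ c₁ / ε * (1 + Real.log (1 / ρ)) + 2 - c₁ / ξ0) :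
    1 - ρ ≤ (μ {ω | ξ K ω ≤ ε}).toReal := by
  have hξ0 : 0 < ξ0 := hε.trans hεξ0
  -- boundedness
  have hbd : ∀ k ω, ξ k ω ≤ ξ0 := by
    intro k
    induction k with
    | zero => intro ω; exact (hdet ω).le
    | succ k ih => intro ω; exact (hmono k ω).trans (ih ω)
  have hint : ∀ k, Integrable (ξ k) μ := by
    intro k
    refine Integrable.mono' (integrable_const ξ0) (hmeas k).aestronglyMeasurable ?_
    filter_upwards with ω
    rw [Real.norm_eq_abs, abs_of_nonneg (hnonneg k ω)]
    exact hbd k ω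
  have hint2 : ∀ k, Integrable (fun ω => ξ k ω ^ 2) μ := by
    intro k
    refine Integrable.mono' (integrable_const (ξ0 ^ 2)) ((hmeas k).pow_const 2).aestronglyMeasurable ?_
    filter_upwards with ω
    rw [Real.norm_eq_abs, abs_of_nonneg (sq_nonneg _)]
    exact pow_le_pow_left₀ (hnonneg k ω) (hbd k ω) 2
  -- the truncated expectation sequence
  set B : ℕ → Set Ω := fun k => {ω | ε < ξ k ω} with hBdef
  have hBmeas : ∀ k, MeasurableSet (B k) := fun k => (hmeas k) measurableSet_Ioi
  set θ : ℕ → ℝ := fun k => ∫ ω in B k, ξ k ω ∂μ with hθdef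
  have hθnn : ∀ k, 0 ≤ θ k := fun k =>
    setIntegral_nonneg (hBmeas k) fun ω _ => hnonneg k ω
  have hμB1 : ∀ k, (μ (B k)).toReal ≤ 1 := by
    intro k
    rw [show (1 : ℝ) = (μ Set.univ).toReal by simp]
    exact ENNReal.toReal_mono (measure_ne_top μ _) (measure_mono (Set.subset_univ _))
  have hθ0 : θ 0 ≤ ξ0 := by
    have : θ 0 = ∫ ω in B 0, ξ0 ∂μ := by
      rw [hθdef]; exact setIntegral_congr_fun (hBmeas 0) fun ω _ => hdet ω
    rw [this, setIntegral_const, smul_eq_mul]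
    calc (μ (B 0)).toReal * ξ0 ≤ 1 * ξ0 :=
          mul_le_mul_of_nonneg_right (hμB1 0) hξ0.le
      _ = ξ0 := one_mul _
  -- key recursions
  have hkey : ∀ k, θ (k + 1) ≤ θ k - θ k ^ 2 / c₁ ∧ θ (k + 1) ≤ (1 - ε / c₁) * θ k := by
    intro k
    have hm : MeasurableSpace.comap (ξ k) Real.measurableSpace ≤ _ :=
      fun s hs => by obtain ⟨t, ht, rfl⟩ := hs; exact hmeas k ht
    have hBm : MeasurableSet[MeasurableSpace.comap (ξ k) Real.measurableSpace] (B k) :=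
      ⟨Set.Ioi ε, measurableSet_Ioi, rfl⟩
    -- Step A: shrink the set
    have hA : θ (k + 1) ≤ ∫ ω in B k, ξ (k + 1) ω ∂μ := by
      apply setIntegral_mono_set (hint (k + 1)).integrableOn
        (Filter.Eventually.of_forall fun ω => hnonneg (k + 1) ω)
      have hsub : B (k + 1) ⊆ B k := fun ω hω => lt_of_lt_of_le hω (hmono k ω)
      exact Filter.Eventually.of_forall hsub
    -- Step B/C: conditional expectation bound on the set B k
    have hBC : ∫ ω in B k, ξ (k + 1) ω ∂μ
        ≤ ∫ ω in B k, (ξ k ω - ξ k ω ^ 2 / c₁) ∂μ := by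
      rw [← setIntegral_condExp hm (hint (k + 1)) hBm]
      exact setIntegral_mono_ae integrable_condExp.integrableOn
        ((hint k).sub ((hint2 k).div_const c₁)).integrableOn (hcond k)
    have hsplit : ∫ ω in B k, (ξ k ω - ξ k ω ^ 2 / c₁) ∂μ
        = θ k - (∫ ω in B k, ξ k ω ^ 2 ∂μ) / c₁ := by
      rw [integral_sub (hint k).integrableOn ((hint2 k).div_const c₁).integrableOn,
        integral_div]
    -- lower bounds for ∫ ξ²
    have hE : θ k ^ 2 ≤ ∫ ω in B k, ξ k ω ^ 2 ∂μ := by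
      have hpt : ∀ ω, 2 * θ k * ξ k ω - θ k ^ 2 ≤ ξ k ω ^ 2 := by
        intro ω; nlinarith [sq_nonneg (ξ k ω - θ k)]
      have h1 : ∫ ω in B k, (2 * θ k * ξ k ω - θ k ^ 2) ∂μ
          ≤ ∫ ω in B k, ξ k ω ^ 2 ∂μ :=
        setIntegral_mono_on
          ((((hint k).const_mul (2 * θ k)).sub (integrable_const _)).integrableOn)
          (hint2 k).integrableOn (hBmeas k) fun ω _ => hpt ω
      have h2 : ∫ ω in B k, (2 * θ k * ξ k ω - θ k ^ 2) ∂μ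
          = 2 * θ k * θ k - θ k ^ 2 * (μ (B k)).toReal := by
        rw [integral_sub ((hint k).const_mul (2 * θ k)).integrableOn
          (integrable_const _).integrableOn, integral_const_mul, setIntegral_const,
          smul_eq_mul, measureReal_def]
        ring
      have h3 : θ k ^ 2 ≤ 2 * θ k * θ k - θ k ^ 2 * (μ (B k)).toReal := by
        nlinarith [hμB1 k, sq_nonneg (θ k)]
      linarith
    have hF : ε * θ k ≤ ∫ ω in B k, ξ k ω ^ 2 ∂μ := by
      have h1 : ∫ ω in B k, ε * ξ k ω ∂μ ≤ ∫ ω in B k, ξ k ω ^ 2 ∂μ := by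
        refine setIntegral_mono_on ((hint k).const_mul ε).integrableOn
          (hint2 k).integrableOn (hBmeas k) fun ω hω => ?_
        have : ε < ξ k ω := hω
        nlinarith [hnonneg k ω]
      rwa [integral_const_mul] at h1
    constructor
    · have hge : θ k ^ 2 / c₁ ≤ (∫ ω in B k, ξ k ω ^ 2 ∂μ) / c₁ :=
        (div_le_div_iff_of_pos_right hc₁).2 hE
      have := hsplit ▸ hBC
      linarith [hA]
    · have h4 : ε * θ k / c₁ ≤ (∫ ω in B k, ξ k ω ^ 2 ∂μ) / c₁ := (div_le_div_iff_of_pos_right hc₁).2 hF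
      have := hsplit ▸ hBC
      calc θ (k + 1) ≤ θ k - (∫ ω in B k, ξ k ω ^ 2 ∂μ) / c₁ := by linarith [hA]
        _ ≤ θ k - ε * θ k / c₁ := by linarith
        _ = (1 - ε / c₁) * θ k := by ring
  -- apply the deterministic recursion
  have hθK : θ K ≤ ε * ρ :=
    rec_bound_aux θ c₁ ε ξ0 ρ hc₁ hε hεξ0 hεc₁ hρ hθ0 hθnn
      (fun k => (hkey k).1) (fun k => (hkey k).2) K hK
  -- Markov
  have hMarkov : ε * (μ (B K)).toReal ≤ θ K := by
    have h1 : ∫ ω in B K, ε ∂μ ≤ ∫ ω in B K, ξ K ω ∂μ :=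
      setIntegral_mono_on (integrable_const _).integrableOn (hint K).integrableOn
        (hBmeas K) fun ω hω => le_of_lt hω
    rwa [setIntegral_const, smul_eq_mul, mul_comm] at h1
  have hμBK : (μ (B K)).toReal ≤ ρ := by
    have : ε * (μ (B K)).toReal ≤ ε * ρ := hMarkov.trans hθK
    exact le_of_mul_le_mul_left this hε
  have hcompl : {ω | ξ K ω ≤ ε} = (B K)ᶜ := by
    ext ω; simp [hBdef, not_lt]
  rw [hcompl, prob_compl_eq_one_sub (hBmeas K), ENNReal.toReal_sub_of_le
    (prob_le_one) (by simp), ENNReal.toReal_one]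
  linarith
end
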